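/- arXiv:2001.02945 — 5 statements merged into one kernel-verified Lean document; each statement's English description precedes it below -/
import Mathlib

section
/- Let p be an odd prime, let n ≥ 2 be an integer, and let G be a group of order 2^n · p generated by three elements ρ0, ρ1, ρ2 each satisfying ρ0^2 = ρ1^2 = ρ2^2 = 1. Then G has a non-trivial normal subgroup whose order is a power of 2. -/
open Subgroup

section Aux

variable {G : Type*} [Group G] [Finite G]

set_option linter.unusedSectionVars false

lemma auxCardLt {H K : Subgroup G} (h : H < K) : Nat.card H < Nat.card K := by
  have hs : (H : Set G) ⊂ (K : Set G) := SetLike.coe_ssubset_coe.mpr h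
  have := Set.ncard_lt_ncard hs (Set.toFinite _)
  rw [← Nat.card_coe_set_eq, ← Nat.card_coe_set_eq] at this; exact this

lemma auxMemMul (P H : Subgroup G)
    (hle : Nat.card G * Nat.card (H ⊓ P : Subgroup G) ≤ Nat.card P * Nat.card H) (g : G) :
    ∃ x ∈ P, ∃ h ∈ H, g = x * h := by
  classical
  letI := Fintype.ofFinite G
  -- P acts on G ⧸ H
  have hstab : MulAction.stabilizer P ((1 : G) : G ⧸ H) = H.subgroupOf P := by
    ext x
    rw [MulAction.mem_stabilizer_iff, Subgroup.mem_subgroupOf]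
    have : (x : G) • ((1 : G) : G ⧸ H) = (((x : G) * 1 : G) : G ⧸ H) :=
      MulAction.Quotient.smul_mk H _ _
    rw [show x • ((1 : G) : G ⧸ H) = (x : G) • ((1 : G) : G ⧸ H) from rfl, this, mul_one,
      show ((1 : G) : G ⧸ H) = QuotientGroup.mk 1 from rfl]
    rw [QuotientGroup.eq]
    simp
  -- orbit-stabilizer
  letI : Fintype (MulAction.orbit P ((1 : G) : G ⧸ H)) := Fintype.ofFinite _
  have horb := MulAction.card_orbit_mul_card_stabilizer_eq_card_group P ((1 : G) : G ⧸ H)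
  -- card of stabilizer
  have hcs : Nat.card (H.subgroupOf P) = Nat.card (H ⊓ P : Subgroup G) := by
    rw [← Subgroup.inf_subgroupOf_right]
    exact Nat.card_congr (Subgroup.subgroupOfEquivOfLe inf_le_right).toEquiv
  -- |G ⧸ H| * |H| = |G|
  have hGH : Nat.card (G ⧸ H) * Nat.card H = Nat.card G := by
    rw [mul_comm]
    exact Subgroup.card_mul_index H ▸ by rw [Subgroup.index]
  -- conclude orbit is everything
  have hHpos : 0 < Nat.card H := Nat.card_pos
  have hIpos : 0 < Nat.card (H ⊓ P : Subgroup G) := Nat.card_pos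
  have horbge : Nat.card (G ⧸ H) ≤ Nat.card (MulAction.orbit P ((1 : G) : G ⧸ H)) := by
    have h1 : Nat.card (MulAction.orbit P ((1 : G) : G ⧸ H)) *
        Nat.card (H ⊓ P : Subgroup G) = Nat.card P := by
      rw [← hcs, ← hstab]
      rw [Nat.card_eq_fintype_card, Nat.card_eq_fintype_card, Nat.card_eq_fintype_card]
      exact horb
    have h2 : Nat.card (G ⧸ H) * Nat.card H * Nat.card (H ⊓ P : Subgroup G) ≤
        Nat.card P * Nat.card H := by rw [hGH]; exact hle
    rw [← h1] at h2
    have h3 : Nat.card (G ⧸ H) * (Nat.card H * Nat.card (H ⊓ P : Subgroup G)) ≤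
        Nat.card (MulAction.orbit P ((1 : G) : G ⧸ H)) * (Nat.card H * Nat.card (H ⊓ P : Subgroup G)) := by
      calc Nat.card (G ⧸ H) * (Nat.card H * Nat.card (H ⊓ P : Subgroup G))
          = Nat.card (G ⧸ H) * Nat.card H * Nat.card (H ⊓ P : Subgroup G) := by ring
        _ ≤ Nat.card (MulAction.orbit P ((1 : G) : G ⧸ H)) * Nat.card (H ⊓ P : Subgroup G) * Nat.card H := h2
        _ = Nat.card (MulAction.orbit P ((1 : G) : G ⧸ H)) * (Nat.card H * Nat.card (H ⊓ P : Subgroup G)) := by ring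
    exact Nat.le_of_mul_le_mul_right h3 (by positivity)
  have horbeq : MulAction.orbit P ((1 : G) : G ⧸ H) = Set.univ := by
    apply Set.eq_of_subset_of_ncard_le (Set.subset_univ _) _ (Set.finite_univ)
    rw [Set.ncard_univ, ← Nat.card_coe_set_eq]
    exact le_trans horbge (le_of_eq (Nat.card_congr (Equiv.refl _)))
  have hg : (g : G ⧸ H) ∈ MulAction.orbit P ((1 : G) : G ⧸ H) := by
    rw [horbeq]; trivial
  obtain ⟨x, hx⟩ := hg
  have hx' : (x : G) • ((1 : G) : G ⧸ H) = (g : G ⧸ H) := hx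
  have heq : (x : G) • ((1 : G) : G ⧸ H) = ((x : G) * 1 : G) := MulAction.Quotient.smul_mk H _ _
  rw [heq, mul_one] at hx'
  have hxg := hx'
  rw [QuotientGroup.eq] at hxg
  exact ⟨x, x.2, (x : G)⁻¹ * g, hxg, by group⟩

lemma auxCyclicTwo {Q : Type*} [Group Q] [Finite Q] (hc : IsCyclic Q) (S : Set Q)
    (hS : Subgroup.closure S = ⊤) (h2 : ∀ x ∈ S, x ^ 2 = 1) : Nat.card Q ∣ 2 := by
  haveI := hc
  have hcomm : ∀ a b : Q, a * b = b * a := fun a b =>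
    (IsCyclic.commGroup (α := Q)).mul_comm a b
  have hall : ∀ x : Q, x ^ 2 = 1 := by
    intro x
    have hx : x ∈ Subgroup.closure S := by rw [hS]; trivial
    induction hx using Subgroup.closure_induction with
    | mem y hy => exact h2 y hy
    | one => simp
    | mul a b _ _ ha hb =>
      have : (a * b) ^ 2 = a ^ 2 * b ^ 2 := by
        simp [pow_two, mul_assoc, hcomm b a]
        rw [← mul_assoc, hcomm b a, mul_assoc]
      rw [this, ha, hb, mul_one]
    | inv a _ ha => rw [inv_pow, ha, inv_one]
  obtain ⟨g, hg⟩ := hc.exists_generator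
  letI := Fintype.ofFinite Q
  have : Nat.card Q = orderOf g := by
    rw [Nat.card_eq_fintype_card, orderOf_eq_card_of_forall_mem_zpowers hg]
    exact Nat.card_eq_fintype_card.symm
  rw [this]
  exact orderOf_dvd_of_pow_eq_one (hall g)

lemma auxPrimeSub {p : ℕ} (hp : p.Prime) (T₁ T₂ : Subgroup G) (h1 : Nat.card T₁ = p)
    (h2 : Nat.card T₂ = p) (hne : T₁ ⊓ T₂ ≠ ⊥) : T₁ = T₂ := by
  obtain ⟨⟨x, hx⟩, hx1⟩ := Subgroup.ne_bot_iff_exists_ne_one.mp hne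
  have hx1' : x ≠ 1 := by simpa [Subtype.ext_iff] using hx1
  have key : ∀ (T : Subgroup G), Nat.card T = p → x ∈ T → T = zpowers x := by
    intro T hT hxT
    have hdvd : orderOf x ∣ p := by
      have : orderOf (⟨x, hxT⟩ : T) ∣ Nat.card T := orderOf_dvd_natCard _
      rw [hT] at this
      rwa [(orderOf_submonoid (⟨x, hxT⟩ : T)).symm] at this
    have hord : orderOf x = p :=
      ((Nat.dvd_prime hp).mp hdvd).resolve_left (by simpa using hx1')
    have hle : zpowers x ≤ T := zpowers_le.mpr hxT
    refine (Subgroup.eq_of_le_of_card_ge hle ?_).symm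
    rw [hT, Nat.card_zpowers, hord]
  rw [key T₁ h1 hx.1, key T₂ h2 hx.2]

lemma orderOf_dvd_card_subgroup {H : Subgroup G} {x : G} (hx : x ∈ H) :
    orderOf x ∣ Nat.card H := by
  have : orderOf (⟨x, hx⟩ : H) ∣ Nat.card H := orderOf_dvd_natCard _
  rwa [(orderOf_submonoid (⟨x, hx⟩ : H)).symm] at this

lemma caseA (p n : ℕ) (hp : p.Prime) (hodd : Odd p) (hn : 2 ≤ n)
    (ρ0 ρ1 ρ2 : G) (hgen : Subgroup.closure {ρ0, ρ1, ρ2} = ⊤)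
    (hcard : Nat.card G = 2 ^ n * p)
    (h0 : ρ0 ^ 2 = 1) (h1 : ρ1 ^ 2 = 1) (h2 : ρ2 ^ 2 = 1)
    (T : Subgroup G) (hT : T.Normal) (hTc : Nat.card T = p) :
    ∃ K : Subgroup G, K.Normal ∧ K ≠ ⊥ ∧ ∃ k : ℕ, Nat.card K = 2 ^ k := by
  classical
  haveI := hT
  haveI hpf : Fact p.Prime := ⟨hp⟩
  have hp2 : p ≠ 2 := by rw [Nat.odd_iff] at hodd; omega
  haveI hTcyc : IsCyclic ↥T := isCyclic_of_prime_card hTc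
  letI : CommGroup ↥T := IsCyclic.commGroup
  -- the conjugation homomorphism
  set φ : G →* MulAut ↥T := MulAut.conjNormal with hφ
  set C : Subgroup G := φ.ker with hC
  -- elements of C commute with elements of T
  have hcent : ∀ c ∈ C, ∀ t ∈ T, c * t = t * c := by
    intro c hc t ht
    have h1 : φ c = 1 := hc
    have h2 : ((φ c) ⟨t, ht⟩ : G) = c * t * c⁻¹ := MulAut.conjNormal_apply c ⟨t, ht⟩
    rw [h1] at h2
    simp only [MulAut.one_apply] at h2
    have h3 : c * t * c⁻¹ = t := (by exact_mod_cast h2 : t = c * t * c⁻¹).symm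
    calc c * t = (c * t * c⁻¹) * c := by group
      _ = t * c := by rw [h3]
  -- T ≤ C
  have hTleC : T ≤ C := by
    intro t ht
    show φ t = 1
    apply MulEquiv.ext
    intro s
    apply Subtype.ext
    have : ((φ t) s : G) = t * s * t⁻¹ := MulAut.conjNormal_apply t s
    rw [this]
    have hcomm := mul_comm (⟨t, ht⟩ : T) s
    have hcomm' : t * (s : G) = (s : G) * t := congrArg Subtype.val hcomm
    rw [show (1 : MulAut ↥T) s = s from rfl]
    calc t * (s : G) * t⁻¹ = (s : G) * t * t⁻¹ := by rw [hcomm']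
      _ = s := by group
  -- the quotient G ⧸ C is cyclic
  set m : ℕ := Nat.card ↥T with hm
  haveI hmp : Fact m.Prime := ⟨hTc ▸ hp⟩
  haveI : NeZero m := ⟨hmp.out.ne_zero⟩
  have e1 : MulAut ↥T ≃* MulAut (Multiplicative (ZMod m)) :=
    MulAut.congr (zmodCyclicMulEquiv hTcyc).symm
  let f2 : MulAut (Multiplicative (ZMod m)) →* Multiplicative (AddAut (ZMod m)) :=
    (MulAutMultiplicative (ZMod m)).toMonoidHom
  have hf2inj : Function.Injective f2 := (MulAutMultiplicative (ZMod m)).injective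
  have e3 : Multiplicative (AddAut (ZMod m)) ≃* (ZMod m)ˣ :=
    AddEquiv.toMultiplicativeLeft (ZMod.AddAutEquivUnits m)
  let Φ : G ⧸ C →* (ZMod m)ˣ :=
    e3.toMonoidHom.comp (f2.comp (e1.toMonoidHom.comp (QuotientGroup.kerLift φ)))
  have hΦinj : Function.Injective Φ := by
    apply Function.Injective.comp e3.injective
    apply Function.Injective.comp hf2inj
    apply Function.Injective.comp e1.injective
    exact QuotientGroup.kerLift_injective φ
  haveI hQcyc : IsCyclic (G ⧸ C) :=
    isCyclic_of_surjective _ (MulEquiv.symm (MonoidHom.ofInjective hΦinj)).surjective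
  -- the quotient is generated by involutions, hence has order dividing 2
  have hQ2 : Nat.card (G ⧸ C) ∣ 2 := by
    set π := QuotientGroup.mk' C with hπ
    refine auxCyclicTwo hQcyc (π '' {ρ0, ρ1, ρ2}) ?_ ?_
    · rw [← MonoidHom.map_closure, hgen]
      exact Subgroup.map_top_of_surjective π (QuotientGroup.mk'_surjective C)
    · rintro x ⟨y, hy, rfl⟩
      rw [← map_pow]
      rcases hy with rfl | rfl | rfl
      · rw [h0, map_one]
      · rw [h1, map_one]
      · rw [h2, map_one]
  -- |C| = 2^k * p with k ≥ 1
  have hCi : Nat.card C * C.index = 2 ^ n * p := by rw [Subgroup.card_mul_index, hcard]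
  have hidx : C.index ∣ 2 := by
    rw [Subgroup.index]; exact hQ2
  have hpC : p ∣ Nat.card C := hTc ▸ Subgroup.card_dvd_of_le hTleC
  obtain ⟨k, hk1, hkC⟩ : ∃ k, 1 ≤ k ∧ Nat.card C = 2 ^ k * p := by
    rcases (Nat.dvd_prime Nat.prime_two).mp hidx with h | h
    · exact ⟨n, by omega, by rw [← hCi, h, mul_one]⟩
    · refine ⟨n - 1, by omega, ?_⟩
      have h2n : (2:ℕ) ^ n = 2 ^ (n - 1) * 2 := by
        rw [← pow_succ]
        congr 1
        omega
      have hC2 : Nat.card C * 2 = 2 ^ n * p := by rw [← hCi, h]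
      have : Nat.card C * 2 = 2 ^ (n - 1) * p * 2 := by rw [hC2, h2n]; ring
      exact Nat.eq_of_mul_eq_mul_right (by norm_num) this
  -- Schur-Zassenhaus complement of T in C
  set T' : Subgroup ↥C := T.subgroupOf C with hT'
  haveI : T'.Normal := Subgroup.normal_subgroupOf
  have hcT' : Nat.card T' = p := by
    rw [hT', ← hTc]
    exact Nat.card_congr (Subgroup.subgroupOfEquivOfLe hTleC).toEquiv
  have hiT' : T'.index = 2 ^ k := by
    have := Subgroup.card_mul_index T'
    rw [hcT', hkC] at this
    have hcmp : p * T'.index = p * 2 ^ k := by rw [this]; ring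
    exact Nat.eq_of_mul_eq_mul_left hp.pos hcmp
  have hcop : Nat.Coprime (Nat.card T') T'.index := by
    rw [hcT', hiT']
    exact Nat.Coprime.pow_right _ ((Nat.coprime_primes hp Nat.prime_two).mpr hp2)
  obtain ⟨K, hK⟩ := Subgroup.exists_right_complement'_of_coprime hcop
  have hcK : Nat.card K = 2 ^ k := by
    have hmul := hK.card_mul
    rw [hcT', hkC] at hmul
    have : p * Nat.card K = p * 2 ^ k := by rw [hmul]; ring
    exact Nat.eq_of_mul_eq_mul_left hp.pos this
  -- K is normal in C
  haveI hKnorm : K.Normal := by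
    constructor
    intro x hx c
    obtain ⟨⟨t', k'⟩, hprod⟩ := hK.2 c
    have hc' : (↑t' : ↥C) * (↑k' : ↥C) = c := hprod
    have ht'T : ((t' : ↥C) : G) ∈ T := by
      have h5 : (↑t' : ↥C) ∈ T' := t'.2
      exact Subgroup.mem_subgroupOf.mp h5
    have hcomm' : ∀ x : ↥C, (↑t' : ↥C) * x = x * ↑t' := by
      intro y
      apply Subtype.ext
      push_cast
      exact (hcent (y : G) y.2 _ ht'T).symm
    have hk'K : (↑k' : ↥C) ∈ K := k'.2
    have : c * x * c⁻¹ = ↑k' * x * (↑k')⁻¹ := by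
      rw [← hc']
      rw [mul_inv_rev]
      calc ↑t' * ↑k' * x * ((↑k')⁻¹ * (↑t')⁻¹)
          = ↑t' * (↑k' * x * (↑k')⁻¹) * (↑t')⁻¹ := by group
        _ = (↑k' * x * (↑k')⁻¹) * ↑t' * (↑t')⁻¹ := by rw [hcomm']
        _ = ↑k' * x * (↑k')⁻¹ := by group
    rw [this]
    exact K.mul_mem (K.mul_mem hk'K hx) (K.inv_mem hk'K)
  -- K is the Sylow 2-subgroup of C
  haveI : Fact (Nat.Prime 2) := ⟨Nat.prime_two⟩
  let SK : Sylow 2 ↥C :=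
    { toSubgroup := K
      isPGroup' := IsPGroup.of_card hcK
      is_maximal' := by
        intro Q hQ hle
        obtain ⟨j, hj⟩ := IsPGroup.iff_card.mp hQ
        have hQdvd : Nat.card Q ∣ 2 ^ k * p := by
          rw [← hkC]
          exact Subgroup.card_subgroup_dvd_card Q
        have hQ2k : Nat.card Q ∣ 2 ^ k := by
          refine Nat.Coprime.dvd_of_dvd_mul_right ?_ hQdvd
          rw [hj]
          exact Nat.Coprime.pow_left _ ((Nat.coprime_primes Nat.prime_two hp).mpr (Ne.symm hp2))
        refine (Subgroup.eq_of_le_of_card_ge hle ?_).symm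
        rw [hcK]
        exact Nat.le_of_dvd (by positivity) hQ2k }
  haveI hKchar : K.Characteristic := Sylow.characteristic_of_normal SK hKnorm
  -- conclude
  refine ⟨K.map C.subtype, inferInstance, ?_, k, ?_⟩
  · have hcmap : Nat.card (K.map C.subtype) = 2 ^ k := by
      rw [← hcK]
      exact (Nat.card_congr (Subgroup.equivMapOfInjective K C.subtype
        (Subgroup.subtype_injective C)).toEquiv).symm
    rw [← Subgroup.one_lt_card_iff_ne_bot, hcmap]
    exact one_lt_pow₀ (by norm_num) (by omega)
  · rw [← hcK]
    exact (Nat.card_congr (Subgroup.equivMapOfInjective K C.subtype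
      (Subgroup.subtype_injective C)).toEquiv).symm

lemma caseB1 (p n : ℕ) (hp : p.Prime) (hodd : Odd p)
    (hcard : Nat.card G = 2 ^ n * p)
    (hsyl2 : ∀ P : Sylow 2 G, Nat.card P = 2 ^ n)
    (P₁ P₂ : Sylow 2 G) (hne : P₁ ≠ P₂) (hbot : P₁.1 ⊓ P₂.1 ≠ ⊥)
    (hmax : ∀ Q₁ Q₂ : Sylow 2 G, Q₁ ≠ Q₂ →
      Nat.card (Q₁.1 ⊓ Q₂.1 : Subgroup G) ≤ Nat.card (P₁.1 ⊓ P₂.1 : Subgroup G)) :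
    ∃ K : Subgroup G, K.Normal ∧ K ≠ ⊥ ∧ ∃ k : ℕ, Nat.card K = 2 ^ k := by
  haveI : Fact (Nat.Prime 2) := ⟨Nat.prime_two⟩
  have hp2 : p ≠ 2 := by rw [Nat.odd_iff] at hodd; omega
  set D : Subgroup G := P₁.1 ⊓ P₂.1 with hD
  set N : Subgroup G := Subgroup.normalizer (D : Set G) with hN
  have hDle1 : D ≤ P₁.1 := inf_le_left
  have hDle2 : D ≤ P₂.1 := inf_le_right
  have hDleN : D ≤ N := le_normalizer
  -- D is a proper subgroup of each Pᵢ
  have hDfull : ∀ P : Sylow 2 G, D = P.1 → False := by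
    intro P hDP
    have hcD : Nat.card D = 2 ^ n := by rw [hDP]; exact hsyl2 P
    have e1 : D = P₁.1 := Subgroup.eq_of_le_of_card_ge hDle1 (by rw [hcD, hsyl2 P₁])
    have e2 : D = P₂.1 := Subgroup.eq_of_le_of_card_ge hDle2 (by rw [hcD, hsyl2 P₂])
    exact hne (Sylow.ext (e1.symm.trans e2))
  have hDne1 : D ≠ P₁.1 := fun h => hDfull P₁ h
  have hDne2 : D ≠ P₂.1 := fun h => hDfull P₂ h
  -- normalizers grow in 2-groups
  have key : ∀ P : Sylow 2 G, D ≤ P.1 → D ≠ P.1 →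
      ∃ x : G, x ∈ P.1 ∧ x ∈ N ∧ x ∉ D := by
    intro P hle hneD
    haveI : Group.IsNilpotent ↥P.1 := (P.isPGroup').isNilpotent
    have hnc := normalizerCondition_of_isNilpotent (G := ↥P.1)
    have hlt : D.subgroupOf P.1 < ⊤ := by
      rcases SetLike.exists_of_lt (lt_of_le_of_ne hle hneD) with ⟨y, hyP, hyD⟩
      refine lt_top_iff_ne_top.mpr fun htop => hyD ?_
      have : (⟨y, hyP⟩ : ↥P.1) ∈ D.subgroupOf P.1 := htop ▸ mem_top _
      exact Subgroup.mem_subgroupOf.mp this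
    obtain ⟨x, hxnorm, hxD⟩ := SetLike.exists_of_lt (hnc _ hlt)
    refine ⟨↑x, x.2, ?_, fun hxmem => hxD ?_⟩
    · rw [Subgroup.mem_normalizer_iff]
      intro g
      constructor
      · intro hg
        have hgD : (⟨g, hle hg⟩ : ↥P.1) ∈ D.subgroupOf P.1 := Subgroup.mem_subgroupOf.mpr hg
        have := (Subgroup.mem_normalizer_iff.mp hxnorm ⟨g, hle hg⟩).mp hgD
        exact Subgroup.mem_subgroupOf.mp this
      · intro hg
        have hgP : g ∈ P.1 := by
          have h1 : (x : G) * g * (x : G)⁻¹ ∈ P.1 := hle hg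
          have h2 : g = (x : G)⁻¹ * ((x : G) * g * (x : G)⁻¹) * (x : G) := by group
          rw [h2]
          exact mul_mem (mul_mem (inv_mem x.2) h1) x.2
        have hgD : (⟨(x : G) * g * (x : G)⁻¹, hle hg⟩ : ↥P.1) ∈ D.subgroupOf P.1 :=
          Subgroup.mem_subgroupOf.mpr hg
        have hco : (⟨(x : G) * g * (x : G)⁻¹, hle hg⟩ : ↥P.1) = x * ⟨g, hgP⟩ * x⁻¹ := by
          ext; simp
        rw [hco] at hgD
        have := (Subgroup.mem_normalizer_iff.mp hxnorm ⟨g, hgP⟩).mpr hgD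
        exact Subgroup.mem_subgroupOf.mp this
    · exact Subgroup.mem_subgroupOf.mpr hxmem
  obtain ⟨x₁, hx₁P, hx₁N, hx₁D⟩ := key P₁ hDle1 hDne1
  obtain ⟨x₂, hx₂P, hx₂N, hx₂D⟩ := key P₂ hDle2 hDne2
  -- p divides |N|
  have hpN : p ∣ Nat.card N := by
    by_contra hnd
    have hcd : Nat.card N ∣ 2 ^ n * p := hcard ▸ Subgroup.card_subgroup_dvd_card _
    have h2 : Nat.card N ∣ 2 ^ n :=
      (Nat.Coprime.dvd_of_dvd_mul_right
        (Nat.Coprime.symm (hp.coprime_iff_not_dvd.mpr hnd)) hcd)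
    obtain ⟨j, _, hj2⟩ := (Nat.dvd_prime_pow Nat.prime_two).mp h2
    have hpg : IsPGroup 2 N := IsPGroup.of_card hj2
    obtain ⟨P₃, hP₃⟩ := hpg.exists_le_sylow
    have hkey : ∀ (P : Sylow 2 G), D ≤ P.1 → ∀ x : G, x ∈ P.1 → x ∈ N → x ∉ D → P₃ = P := by
      intro P hDleP x hxP hxN hxD
      by_contra hne3
      have hlt : D < P.1 ⊓ P₃.1 := by
        refine lt_of_le_of_ne (le_inf hDleP (le_trans hDleN hP₃)) fun heq => hxD ?_
        rw [heq]
        exact ⟨hxP, hP₃ hxN⟩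
      have h5 := auxCardLt hlt
      have h6 := hmax P P₃ fun h => hne3 h.symm
      omega
    have e1 := hkey P₁ hDle1 x₁ hx₁P hx₁N hx₁D
    have e2 := hkey P₂ hDle2 x₂ hx₂P hx₂N hx₂D
    exact hne (e1 ▸ e2)
  -- |H ⊓ P₁| is a 2-power
  have hinf2 : ∃ b, Nat.card (N ⊓ P₁.1 : Subgroup G) = 2 ^ b := by
    have : Nat.card (N ⊓ P₁.1 : Subgroup G) ∣ 2 ^ n := by
      have := Subgroup.card_dvd_of_le (inf_le_right : N ⊓ P₁.1 ≤ P₁.1)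
      rwa [hsyl2 P₁] at this
    obtain ⟨b, _, hb⟩ := (Nat.dvd_prime_pow Nat.prime_two).mp this
    exact ⟨b, hb⟩
  obtain ⟨b, hb⟩ := hinf2
  -- the decomposition inequality
  have hmul : Nat.card G * Nat.card (N ⊓ P₁.1 : Subgroup G) ≤ Nat.card P₁.1 * Nat.card N := by
    have hdv : p * 2 ^ b ∣ Nat.card N := by
      refine Nat.Coprime.mul_dvd_of_dvd_of_dvd ?_ hpN ?_
      · exact Nat.Coprime.pow_right b ((Nat.coprime_primes hp Nat.prime_two).mpr hp2)
      · rw [← hb]; exact Subgroup.card_dvd_of_le inf_le_left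
    have hlee : p * 2 ^ b ≤ Nat.card N := Nat.le_of_dvd Nat.card_pos hdv
    calc Nat.card G * Nat.card (N ⊓ P₁.1 : Subgroup G) = 2 ^ n * p * 2 ^ b := by
          rw [hcard, hb]
      _ = 2 ^ n * (p * 2 ^ b) := by ring
      _ ≤ 2 ^ n * Nat.card N := Nat.mul_le_mul_left _ hlee
      _ = Nat.card P₁.1 * Nat.card N := by rw [hsyl2 P₁]
  -- K := normal closure of D
  refine ⟨Subgroup.normalClosure (D : Set G), Subgroup.normalClosure_normal, ?_, ?_⟩
  · intro hKbot
    exact hbot (le_bot_iff.mp (hKbot ▸ Subgroup.le_normalClosure))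
  · have hKle : Subgroup.normalClosure (D : Set G) ≤ P₁.1 := by
      show Subgroup.closure (Group.conjugatesOfSet (D : Set G)) ≤ P₁.1
      refine (Subgroup.closure_le _).mpr ?_
      intro a ha
      obtain ⟨d, hd, hconj⟩ := Group.mem_conjugatesOfSet_iff.mp ha
      obtain ⟨c, hc⟩ := isConj_iff.mp hconj
      obtain ⟨x, hx, h, hh, rfl⟩ := auxMemMul P₁.1 N hmul c
      have hhd : h * d * h⁻¹ ∈ D := (Subgroup.mem_normalizer_iff.mp hh d).mp hd
      have : (x * h) * d * (x * h)⁻¹ = x * (h * d * h⁻¹) * x⁻¹ := by group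
      rw [← hc, this]
      exact mul_mem (mul_mem hx (hDle1 hhd)) (inv_mem hx)
    have : Nat.card (Subgroup.normalClosure (D : Set G)) ∣ 2 ^ n := by
      have := Subgroup.card_dvd_of_le hKle
      rwa [hsyl2 P₁] at this
    obtain ⟨k, _, hk⟩ := (Nat.dvd_prime_pow Nat.prime_two).mp this
    exact ⟨k, hk⟩

lemma caseB2 (p n : ℕ) (hp : p.Prime) (hodd : Odd p) (hn : 2 ≤ n)
    (hcard : Nat.card G = 2 ^ n * p)
    (hsyl2 : ∀ P : Sylow 2 G, Nat.card P = 2 ^ n)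
    (hsylp : ∀ T : Sylow p G, Nat.card T = p)
    (htriv : ∀ P₁ P₂ : Sylow 2 G, P₁ ≠ P₂ → P₁.1 ⊓ P₂.1 = ⊥)
    (hn2 : Nat.card (Sylow 2 G) = p)
    (hnp : p + 1 ≤ Nat.card (Sylow p G)) : False := by
  classical
  letI := Fintype.ofFinite G
  letI := Fintype.ofFinite (Sylow 2 G)
  letI := Fintype.ofFinite (Sylow p G)
  have hp2 : p ≠ 2 := by rw [Nat.odd_iff] at hodd; omega
  have hp3 : 3 ≤ p := by
    have := hp.two_le; rw [Nat.odd_iff] at hodd; omega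
  set f2 : Sylow 2 G → Finset G := fun P => (Finset.univ.filter (· ∈ P.1)).erase 1 with hf2
  set fp : Sylow p G → Finset G := fun T => (Finset.univ.filter (· ∈ T.1)).erase 1 with hfp
  have hcf : ∀ (H : Subgroup G), (Finset.univ.filter (· ∈ H)).card = Nat.card H := by
    intro H
    rw [Nat.card_eq_fintype_card, Fintype.card_subtype]
  have hmem2 : ∀ (P : Sylow 2 G) (a : G), a ∈ f2 P ↔ a ≠ 1 ∧ a ∈ P.1 := by
    intro P a; simp [hf2]
  have hmemp : ∀ (T : Sylow p G) (a : G), a ∈ fp T ↔ a ≠ 1 ∧ a ∈ T.1 := by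
    intro T a; simp [hfp]
  have hcf2 : ∀ P : Sylow 2 G, (f2 P).card = 2 ^ n - 1 := by
    intro P
    rw [hf2]
    rw [Finset.card_erase_of_mem (by simp [one_mem]), hcf, hsyl2 P]
  have hcfp : ∀ T : Sylow p G, (fp T).card = p - 1 := by
    intro T
    rw [hfp]
    rw [Finset.card_erase_of_mem (by simp [one_mem]), hcf, hsylp T]
  set A : Finset G := Finset.univ.biUnion f2 with hA
  set B : Finset G := Finset.univ.biUnion fp with hB
  have hcardA : A.card = p * (2 ^ n - 1) := by
    rw [hA, Finset.card_biUnion, Finset.sum_congr rfl (fun P _ => hcf2 P),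
      Finset.sum_const, smul_eq_mul, Finset.card_univ, ← Nat.card_eq_fintype_card, hn2]
    intro P _ P' _ hne
    rw [Function.onFun, Finset.disjoint_left]
    intro a ha ha'
    rw [hmem2] at ha ha'
    have : a ∈ P.1 ⊓ P'.1 := ⟨ha.2, ha'.2⟩
    rw [htriv P P' hne] at this
    exact ha.1 this
  have hcardB : B.card = Nat.card (Sylow p G) * (p - 1) := by
    rw [hB, Finset.card_biUnion, Finset.sum_congr rfl (fun T _ => hcfp T),
      Finset.sum_const, smul_eq_mul, Finset.card_univ, ← Nat.card_eq_fintype_card]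
    intro T _ T' _ hne
    rw [Function.onFun, Finset.disjoint_left]
    intro a ha ha'
    rw [hmemp] at ha ha'
    refine hne (Sylow.ext (auxPrimeSub hp T.1 T'.1 (hsylp T) (hsylp T') ?_))
    rw [Subgroup.ne_bot_iff_exists_ne_one]
    exact ⟨⟨a, ⟨ha.2, ha'.2⟩⟩, by simp [Subtype.ext_iff, ha.1]⟩
  have hdisjAB : Disjoint A B := by
    rw [Finset.disjoint_left]
    intro a haA haB
    obtain ⟨P, _, haP⟩ := Finset.mem_biUnion.mp haA
    obtain ⟨T, _, haT⟩ := Finset.mem_biUnion.mp haB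
    rw [hmem2] at haP
    rw [hmemp] at haT
    have h2 : orderOf a ∣ 2 ^ n := by
      have := orderOf_dvd_card_subgroup haP.2
      rwa [hsyl2 P] at this
    have hpd : orderOf a ∣ p := by
      have := orderOf_dvd_card_subgroup haT.2
      rwa [hsylp T] at this
    have hco : Nat.Coprime (2 ^ n) p :=
      Nat.Coprime.pow_left n ((Nat.coprime_primes Nat.prime_two hp).mpr (Ne.symm hp2))
    have hg1 : Nat.gcd (2 ^ n) p = 1 := hco
    have : orderOf a ∣ 1 := hg1 ▸ Nat.dvd_gcd h2 hpd
    exact haP.1 (orderOf_eq_one_iff.mp (Nat.dvd_one.mp this))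
  have hsub : A ∪ B ⊆ Finset.univ.erase 1 := by
    intro a ha
    rw [Finset.mem_union] at ha
    rw [Finset.mem_erase]
    refine ⟨?_, Finset.mem_univ _⟩
    rcases ha with h | h
    · obtain ⟨P, _, haP⟩ := Finset.mem_biUnion.mp h
      exact ((hmem2 P a).mp haP).1
    · obtain ⟨T, _, haT⟩ := Finset.mem_biUnion.mp h
      exact ((hmemp T a).mp haT).1
  have hcardle : A.card + B.card ≤ 2 ^ n * p - 1 := by
    rw [← Finset.card_union_of_disjoint hdisjAB]
    calc (A ∪ B).card ≤ (Finset.univ.erase (1 : G)).card := Finset.card_le_card hsub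
      _ = Fintype.card G - 1 := by rw [Finset.card_erase_of_mem (Finset.mem_univ _), Finset.card_univ]
      _ = 2 ^ n * p - 1 := by rw [← Nat.card_eq_fintype_card, hcard]
  -- arithmetic contradiction
  have hBge : (p + 1) * (p - 1) ≤ B.card := by
    rw [hcardB]
    exact Nat.mul_le_mul_right _ hnp
  rw [hcardA] at hcardle
  have hX : 4 ≤ 2 ^ n := by
    calc (4:ℕ) = 2 ^ 2 := by norm_num
      _ ≤ 2 ^ n := Nat.pow_le_pow_right (by norm_num) hn
  have e1 : p * (2 ^ n - 1) = p * 2 ^ n - p := by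
    rw [Nat.mul_sub, mul_one]
  have e2 : (p + 1) * (p - 1) = p * p - 1 := by
    obtain ⟨m, rfl⟩ : ∃ m, p = m + 1 := ⟨p - 1, by omega⟩
    simp only [Nat.add_sub_cancel]
    have h : (m + 1 + 1) * m + 1 = (m + 1) * (m + 1) := by ring
    omega
  have hple : p ≤ p * 2 ^ n := Nat.le_mul_of_pos_right _ (by positivity)
  have hppgt : p < p * p := by nlinarith [hp3]
  rw [e1] at hcardle
  rw [e2] at hBge
  have : p * 2 ^ n - p + (p * p - 1) ≤ 2 ^ n * p - 1 := le_trans (Nat.add_le_add_left hBge _) hcardle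
  rw [mul_comm (2 ^ n) p] at this
  omega

end Aux

/-- The Claim in the proof of Theorem 3.1: a group of order `2^n * p` (`p` odd prime,
`n ≥ 2`) generated by three involutions has a non-trivial normal subgroup of 2-power order. -/
theorem stmt_2 {G : Type*} [Group G] [Finite G] (p n : ℕ)
    (hp : p.Prime) (hodd : Odd p) (hn : 2 ≤ n)
    (ρ0 ρ1 ρ2 : G) (hgen : Subgroup.closure {ρ0, ρ1, ρ2} = ⊤)
    (hcard : Nat.card G = 2 ^ n * p)
    (h0 : ρ0 ^ 2 = 1) (h1 : ρ1 ^ 2 = 1) (h2 : ρ2 ^ 2 = 1) :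
    ∃ K : Subgroup G, K.Normal ∧ K ≠ ⊥ ∧ ∃ k : ℕ, Nat.card K = 2 ^ k := by
  have hG0 : Nat.card G ≠ 0 := Nat.card_pos.ne'
  haveI hpf : Fact p.Prime := ⟨hp⟩
  haveI : Fact (Nat.Prime 2) := ⟨Nat.prime_two⟩
  have hp2 : p ≠ 2 := by rintro rfl; exact (Nat.not_odd_iff_even.mpr even_two) hodd
  have hpodd : ¬ (2 ∣ p) := by
    rw [Nat.odd_iff] at hodd; omega
  -- factorization facts
  have h2n0 : (2:ℕ) ^ n ≠ 0 := by positivity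
  have hfact2 : (Nat.card G).factorization 2 = n := by
    rw [hcard, Nat.factorization_mul h2n0 hp.ne_zero]
    simp [Nat.Prime.factorization_pow, Nat.factorization_eq_zero_of_not_dvd hpodd,
      Nat.Prime.factorization_self Nat.prime_two]
  have hpn2 : ¬ p ∣ 2 ^ n := by
    intro hdvd
    have := Nat.le_of_dvd (by norm_num) (hp.dvd_of_dvd_pow hdvd)
    rw [Nat.odd_iff] at hodd
    have := hp.two_le
    omega
  have hfactp : (Nat.card G).factorization p = 1 := by
    rw [hcard, Nat.factorization_mul h2n0 hp.ne_zero]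
    have h2p : (2:ℕ).factorization p = 0 :=
      Nat.factorization_eq_zero_of_not_dvd (by
        intro hdvd
        have := Nat.le_of_dvd (by norm_num) hdvd
        have := hp.two_le
        omega)
    simp [Nat.factorization_eq_zero_of_not_dvd hpn2, hp.factorization_self, h2p]
  have hsyl2 : ∀ P : Sylow 2 G, Nat.card P = 2 ^ n := by
    intro P; rw [Sylow.card_eq_multiplicity, hfact2]
  have hsylp : ∀ T : Sylow p G, Nat.card T = p := by
    intro T; rw [Sylow.card_eq_multiplicity, hfactp, pow_one]
  by_cases hA : Nat.card (Sylow p G) = 1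
  · -- unique Sylow p-subgroup: it is normal
    haveI : Subsingleton (Sylow p G) := Nat.card_eq_one_iff_unique.mp hA |>.1
    obtain ⟨T⟩ : Nonempty (Sylow p G) := Sylow.nonempty
    have hTnorm : T.1.Normal := by
      rw [← normalizer_eq_top_iff]
      rw [eq_top_iff]
      intro g _
      refine Sylow.smul_eq_iff_mem_normalizer.mp ?_
      exact Subsingleton.elim _ _
    exact caseA p n hp hodd hn ρ0 ρ1 ρ2 hgen hcard h0 h1 h2 T.1 hTnorm (hsylp T)
  · by_cases hB : ∃ P₁ P₂ : Sylow 2 G, P₁ ≠ P₂ ∧ P₁.1 ⊓ P₂.1 ≠ ⊥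
    · -- pick a maximal intersection
      classical
      letI := Fintype.ofFinite (Sylow 2 G)
      obtain ⟨P₁, P₂, hne, hbot⟩ := hB
      set s : Finset (Sylow 2 G × Sylow 2 G) :=
        Finset.univ.filter (fun q => q.1 ≠ q.2 ∧ q.1.1 ⊓ q.2.1 ≠ ⊥) with hs
      have hmem : (P₁, P₂) ∈ s := by simp [hs, hne, hbot]
      obtain ⟨q, hq, hqmax⟩ := s.exists_max_image
        (fun q => Nat.card (q.1.1 ⊓ q.2.1 : Subgroup G)) ⟨_, hmem⟩
      simp only [hs, Finset.mem_filter] at hq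
      refine caseB1 p n hp hodd hcard hsyl2 q.1 q.2 hq.2.1 hq.2.2 ?_
      intro Q₁ Q₂ hQne
      by_cases hQbot : Q₁.1 ⊓ Q₂.1 = ⊥
      · rw [hQbot]
        have h1 : 0 < Nat.card (q.1.1 ⊓ q.2.1 : Subgroup G) := Nat.card_pos
        have : Nat.card ((⊥ : Subgroup G) : Subgroup G) = 1 := Subgroup.card_bot
        omega
      · exact hqmax (Q₁, Q₂) (by simp [hs, hQne, hQbot])
    · push_neg at hB
      -- number of Sylow 2-subgroups divides p
      obtain ⟨P⟩ : Nonempty (Sylow 2 G) := Sylow.nonempty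
      have hidx : P.1.index = p := by
        have := Subgroup.card_mul_index P.1
        rw [hsyl2 P, hcard] at this
        exact Nat.eq_of_mul_eq_mul_left (by positivity) this
      have hdvd : Nat.card (Sylow 2 G) ∣ p := hidx ▸ Sylow.card_dvd_index P
      rcases (Nat.Prime.eq_one_or_self_of_dvd hp _ hdvd) with hone | hpn
      · -- unique Sylow 2-subgroup: normal
        haveI : Subsingleton (Sylow 2 G) := Nat.card_eq_one_iff_unique.mp hone |>.1
        have hPnorm : P.1.Normal := by
          rw [← normalizer_eq_top_iff, eq_top_iff]
          intro g _
          refine Sylow.smul_eq_iff_mem_normalizer.mp ?_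
          exact Subsingleton.elim _ _
        refine ⟨P.1, hPnorm, ?_, n, hsyl2 P⟩
        rw [← Subgroup.one_lt_card_iff_ne_bot, hsyl2 P]
        exact one_lt_pow₀ (by norm_num) (by omega)
      · -- p Sylow 2-subgroups, several Sylow p-subgroups: contradiction
        exfalso
        have hnp1 : Nat.card (Sylow p G) ≡ 1 [MOD p] := card_sylow_modEq_one p G
        have hpos : 0 < Nat.card (Sylow p G) := Nat.card_pos
        have hge : p + 1 ≤ Nat.card (Sylow p G) := by
          have := (Nat.modEq_iff_dvd' hpos).mp hnp1.symm
          rcases this with ⟨c, hc⟩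
          rcases Nat.eq_zero_or_pos c with rfl | hcpos
          · omega
          · have := Nat.le_of_dvd (by omega) ⟨c, hc⟩
            omega
        exact caseB2 p n hp hodd hn hcard hsyl2 hsylp (fun P₁ P₂ h => by
          by_contra hne; exact hne (hB P₁ P₂ h)) hpn hge
end

section
/- For an integer k ≥ 2, let L2 be the presented group on generators ρ0, ρ1, ρ2 with relation set {ρ0^2, ρ1^2, ρ2^2, (ρ0ρ1)^2, (ρ1ρ2)^k, (ρ0ρ2)^2}. Then L2 has order 4k, L2 is isomorphic to the direct product of a cyclic group of order 2 with the dihedral group of order 2k, and in L2 the images of ρ0, ρ1, ρ2, ρ0ρ1, ρ0ρ2 have order exactly 2 while the image of ρ1ρ2 has order exactly k. -/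
namespace Stmt4

def r0 : FreeGroup (Fin 3) := FreeGroup.of 0
def r1 : FreeGroup (Fin 3) := FreeGroup.of 1
def r2 : FreeGroup (Fin 3) := FreeGroup.of 2

/-- The relations of the presented group `L2` of Proposition 2.1. -/
def rels (k : ℕ) : Set (FreeGroup (Fin 3)) :=
  {r0 ^ 2, r1 ^ 2, r2 ^ 2, (r0 * r1) ^ 2, (r1 * r2) ^ k, (r0 * r2) ^ 2}

/-- The image of the `i`-th generator in `L2`. -/
def g (k : ℕ) (i : Fin 3) : PresentedGroup (rels k) := PresentedGroup.of i


open DihedralGroup in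
def fgen (k : ℕ) : Fin 3 → Multiplicative (ZMod 2) × DihedralGroup k :=
  ![(Multiplicative.ofAdd 1, 1), (1, sr 0), (1, sr 1)]

open DihedralGroup in
lemma fgen_rels (k : ℕ) : ∀ w ∈ rels k, FreeGroup.lift (fgen k) w = 1 := by
  intro w hw
  have h2 : ((Multiplicative.ofAdd (1 : ZMod 2)) * Multiplicative.ofAdd 1 : Multiplicative (ZMod 2)) = 1 := by decide
  rcases hw with rfl | rfl | rfl | rfl | rfl | rfl <;>
    simp [r0, r1, r2, fgen, Prod.pow_mk, Prod.ext_iff, h2, pow_two, sr_mul_sr, r_mul_r, sr_mul_self, r_one_pow,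
      ZMod.natCast_self, one_def, -r_zero]

/-- The homomorphism to `C₂ × D_k`. -/
def φ (k : ℕ) : PresentedGroup (rels k) →* Multiplicative (ZMod 2) × DihedralGroup k :=
  PresentedGroup.toGroup (fgen_rels k)

section
variable (k : ℕ)

lemma rel_one {w : FreeGroup (Fin 3)} (h : w ∈ rels k) :
    PresentedGroup.mk (rels k) w = 1 :=
  (QuotientGroup.eq_one_iff _).2 (Subgroup.subset_normalClosure h)

lemma ha : g k 0 ^ 2 = 1 := by
  have := rel_one k (show r0 ^ 2 ∈ rels k by simp [rels])
  simpa [r0, g, PresentedGroup.of] using this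

lemma hb : g k 1 ^ 2 = 1 := by
  have := rel_one k (show r1 ^ 2 ∈ rels k by simp [rels])
  simpa [r1, g, PresentedGroup.of] using this

lemma hc : g k 2 ^ 2 = 1 := by
  have := rel_one k (show r2 ^ 2 ∈ rels k by simp [rels])
  simpa [r2, g, PresentedGroup.of] using this

lemma hab : (g k 0 * g k 1) ^ 2 = 1 := by
  have := rel_one k (show (r0 * r1) ^ 2 ∈ rels k by simp [rels])
  simpa [r0, r1, g, PresentedGroup.of] using this

lemma hac : (g k 0 * g k 2) ^ 2 = 1 := by
  have := rel_one k (show (r0 * r2) ^ 2 ∈ rels k by simp [rels])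
  simpa [r0, r2, g, PresentedGroup.of] using this

lemma htk : (g k 1 * g k 2) ^ k = 1 := by
  have := rel_one k (show (r1 * r2) ^ k ∈ rels k by simp [rels])
  simpa [r1, r2, g, PresentedGroup.of] using this

/-- shorthand -/
local notation "a" => g k 0
local notation "b" => g k 1
local notation "c" => g k 2
local notation "t" => g k 1 * g k 2

lemma sq_one_inv {G : Type*} [Group G] {x : G} (h : x ^ 2 = 1) : x⁻¹ = x := by
  rw [pow_two] at h
  exact inv_eq_of_mul_eq_one_right h

lemma comm_of_sq {G : Type*} [Group G] {x y : G} (hx : x ^ 2 = 1) (hy : y ^ 2 = 1)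
    (hxy : (x * y) ^ 2 = 1) : Commute x y := by
  have h1 : (x * y)⁻¹ = x * y := sq_one_inv hxy
  have : y⁻¹ * x⁻¹ = x * y := by rw [← mul_inv_rev]; exact h1
  rw [sq_one_inv hx, sq_one_inv hy] at this
  exact (this).symm

lemma comm_ab : Commute a b := comm_of_sq (ha k) (hb k) (hab k)
lemma comm_ac : Commute a c := comm_of_sq (ha k) (hc k) (hac k)
lemma comm_at : Commute a t := (comm_ab k).mul_right (comm_ac k)

lemma btb : b * t * b = t⁻¹ := by
  have h1 := sq_one_inv (hb k)
  have h2 := sq_one_inv (hc k)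
  rw [mul_inv_rev, h1, h2]
  have : b * (b * c) = c := by
    rw [← mul_assoc, ← pow_two, hb k, one_mul]
  rw [this]

lemma b_zpow (m : ℤ) : b * t ^ m * b = t ^ (-m) := by
  have h1 := sq_one_inv (hb k)
  calc b * t ^ m * b = b * t ^ m * b⁻¹ := by rw [h1]
    _ = (b * t * b⁻¹) ^ m := by rw [conj_zpow]
    _ = (b * t * b) ^ m := by rw [h1]
    _ = (t⁻¹) ^ m := by rw [btb k]
    _ = t ^ (-m) := by rw [inv_zpow, ← zpow_neg]

lemma t_mod (m n : ℤ) (h : (m : ZMod k) = (n : ZMod k)) : t ^ m = t ^ n := by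
  have hd : (k : ℤ) ∣ n - m := ((ZMod.intCast_eq_intCast_iff m n k).mp h).dvd
  obtain ⟨q, hq⟩ := hd
  have hn : n = m + k * q := by linarith
  rw [hn, zpow_add, zpow_mul, zpow_natCast, htk k, one_zpow, mul_one]

variable [NeZero k]

/-- rotation part map -/
def e (i : ZMod k) : PresentedGroup (rels k) := t ^ (i.val : ℤ)

lemma e_intCast (m : ℤ) : e k ((m : ZMod k)) = t ^ m := by
  unfold e
  apply t_mod
  push_cast [ZMod.natCast_val, ZMod.intCast_cast]
  simp [ZMod.intCast_zmod_cast]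

lemma e_add (i j : ZMod k) : e k (i + j) = e k i * e k j := by
  unfold e
  rw [← zpow_add]
  apply t_mod
  push_cast [ZMod.natCast_val]
  ring

lemma e_zero : e k 0 = 1 := by simp [e, ZMod.val_zero]

lemma b_e (i : ZMod k) : b * e k i * b = e k (-i) := by
  unfold e
  rw [b_zpow]
  apply t_mod
  push_cast [ZMod.natCast_val]
  ring

lemma e_b (i : ZMod k) : e k i * b = b * e k (-i) := by
  have h1 := sq_one_inv (hb k)
  have h := b_e k (-i)
  rw [neg_neg] at h
  calc e k i * b = b * (b * e k i * b) := by
        rw [← mul_assoc, ← mul_assoc, ← pow_two, hb k, one_mul]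
    _ = b * e k (-i) := by rw [b_e]

open DihedralGroup in
/-- The inverse on the dihedral factor. -/
def ψ2fun : DihedralGroup k → PresentedGroup (rels k)
  | r i => e k i
  | sr i => b * e k i

open DihedralGroup in
def ψ2 : DihedralGroup k →* PresentedGroup (rels k) where
  toFun := ψ2fun k
  map_one' := by show ψ2fun k (r 0) = 1; simp [ψ2fun, e_zero]
  map_mul' x y := by
    rcases x with i | i <;> rcases y with j | j <;>
      simp only [r_mul_r, r_mul_sr, sr_mul_r, sr_mul_sr, ψ2fun]
    · rw [e_add]
    · rw [show j - i = -i + j by ring, e_add, ← mul_assoc, ← e_b, mul_assoc]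
    · rw [e_add, mul_assoc]
    · rw [show j - i = -i + j by ring, e_add, ← mul_assoc, ← b_e]
  
def ψ1 : Multiplicative (ZMod 2) →* PresentedGroup (rels k) where
  toFun x := a ^ (x.toAdd.val)
  map_one' := by simp [ZMod.val_zero]
  map_mul' x y := by
    simp only [toAdd_mul, ZMod.val_add, ← pow_add]
    exact (pow_eq_pow_mod _ (ha k)).symm

lemma comm_a_ψ2 (y : DihedralGroup k) : Commute a (ψ2 k y) := by
  have hat : Commute a t := comm_at k
  have he : ∀ i : ZMod k, Commute a (e k i) := fun i => hat.zpow_right _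
  rcases y with i | i
  · exact he i
  · exact ((comm_ab k).mul_right (he i))

lemma comm_ψ (x : Multiplicative (ZMod 2)) (y : DihedralGroup k) :
    Commute (ψ1 k x) (ψ2 k y) := by
  show Commute (a ^ _) _
  exact (comm_a_ψ2 k y).pow_left _

def ψ : Multiplicative (ZMod 2) × DihedralGroup k →* PresentedGroup (rels k) :=
  MonoidHom.noncommCoprod (ψ1 k) (ψ2 k) (comm_ψ k)

open DihedralGroup

lemma φ_of (i : Fin 3) : φ k (PresentedGroup.of i) = fgen k i :=
  PresentedGroup.toGroup.of (fgen_rels k)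

lemma φ_a : φ k a = (Multiplicative.ofAdd 1, 1) := φ_of k 0
lemma φ_b : φ k b = (1, sr 0) := φ_of k 1
lemma φ_c : φ k c = (1, sr 1) := φ_of k 2

lemma φ_t : φ k t = (1, r 1) := by
  rw [map_mul, φ_b, φ_c]
  simp [Prod.ext_iff, sr_mul_sr]

lemma φ_e (i : ZMod k) : φ k (e k i) = (1, r i) := by
  unfold e
  rw [map_zpow, φ_t, zpow_natCast]
  simp [Prod.pow_mk, Prod.ext_iff, r_one_pow, ZMod.natCast_val, ZMod.cast_id]

lemma φ_ψ2 (d : DihedralGroup k) : φ k (ψ2 k d) = (1, d) := by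
  rcases d with i | i
  · exact φ_e k i
  · show φ k (b * e k i) = _
    rw [map_mul, φ_b, φ_e]
    simp [Prod.ext_iff, sr_mul_r]

lemma φ_ψ1 (x : Multiplicative (ZMod 2)) : φ k (ψ1 k x) = (x, 1) := by
  show φ k (a ^ x.toAdd.val) = _
  rw [map_pow, φ_a]
  simp only [Prod.pow_mk, one_pow, Prod.mk.injEq, and_true]
  rw [← ofAdd_nsmul]
  simp [ZMod.natCast_val, ZMod.cast_id]

lemma φ_ψ : (φ k).comp (ψ k) = MonoidHom.id _ := by
  ext p
  · rcases p with ⟨x, d⟩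
    show (φ k ((ψ1 k) x * (ψ2 k) d)).1 = x
    rw [map_mul, φ_ψ1, φ_ψ2]
    simp
  · rcases p with ⟨x, d⟩
    show (φ k ((ψ1 k) x * (ψ2 k) d)).2 = d
    rw [map_mul, φ_ψ1, φ_ψ2]
    simp

lemma val_one' (hk : 2 ≤ k) : (1 : ZMod k).val = 1 := by
  haveI : Fact (1 < k) := ⟨hk⟩
  exact ZMod.val_one k

lemma ψ_pair (x : Multiplicative (ZMod 2)) (d : DihedralGroup k) :
    ψ k (x, d) = ψ1 k x * ψ2 k d := rfl

lemma ψ_fgen0 : ψ k (fgen k 0) = a := by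
  rw [show fgen k 0 = (Multiplicative.ofAdd 1, (1 : DihedralGroup k)) from rfl, ψ_pair,
    (ψ2 k).map_one, mul_one]
  show a ^ (Multiplicative.ofAdd (1 : ZMod 2)).toAdd.val = a
  norm_num [show (1 : ZMod 2).val = 1 from rfl]

lemma ψ_fgen1 : ψ k (fgen k 1) = b := by
  rw [show fgen k 1 = ((1 : Multiplicative (ZMod 2)), sr 0) from rfl, ψ_pair,
    (ψ1 k).map_one, one_mul]
  show b * e k 0 = b
  rw [e_zero, mul_one]

lemma ψ_fgen2 (hk : 2 ≤ k) : ψ k (fgen k 2) = c := by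
  rw [show fgen k 2 = ((1 : Multiplicative (ZMod 2)), sr 1) from rfl, ψ_pair,
    (ψ1 k).map_one, one_mul]
  show b * e k 1 = c
  unfold e
  rw [val_one' k hk]
  rw [Nat.cast_one, zpow_one, ← mul_assoc, ← pow_two, hb k, one_mul]

lemma ψ_φ (hk : 2 ≤ k) : (ψ k).comp (φ k) = MonoidHom.id _ := by
  apply PresentedGroup.ext
  intro i
  show ψ k (φ k (PresentedGroup.of i)) = PresentedGroup.of i
  rw [φ_of]
  fin_cases i
  · exact ψ_fgen0 k
  · exact ψ_fgen1 k
  · exact ψ_fgen2 k hk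

/-- The isomorphism. -/
def iso (hk : 2 ≤ k) : PresentedGroup (rels k) ≃* Multiplicative (ZMod 2) × DihedralGroup k :=
  MonoidHom.toMulEquiv (φ k) (ψ k) (ψ_φ k hk) (φ_ψ k)

lemma orderOf_t (hk : 2 ≤ k) : orderOf (g k 1 * g k 2) = k := by
  refine Nat.dvd_antisymm (orderOf_dvd_of_pow_eq_one (htk k)) ?_
  have h1 : orderOf ((φ k) t) ∣ orderOf t := orderOf_map_dvd (φ k) _
  rw [φ_t] at h1
  have h2 : orderOf (r 1 : DihedralGroup k) ∣
      orderOf (((1 : Multiplicative (ZMod 2)), r (1 : ZMod k))) :=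
    orderOf_map_dvd (MonoidHom.snd (Multiplicative (ZMod 2)) (DihedralGroup k)) _
  rw [DihedralGroup.orderOf_r_one] at h2
  exact dvd_trans h2 h1

lemma a_ne_one : a ≠ 1 := by
  intro h
  have h1 := φ_a k
  rw [h, map_one] at h1
  have := congrArg Prod.fst h1
  rw [Prod.fst_one] at this
  have h3 : (1 : Multiplicative (ZMod 2)) = Multiplicative.ofAdd 1 := this
  exact absurd h3 (by decide)

lemma b_ne_one : b ≠ 1 := by
  intro h
  have h1 := φ_b k
  rw [h, map_one] at h1
  have := congrArg Prod.snd h1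
  rw [Prod.snd_one, DihedralGroup.one_def] at this
  exact absurd this (by simp [-r_zero])

lemma c_ne_one : c ≠ 1 := by
  intro h
  have h1 := φ_c k
  rw [h, map_one] at h1
  have := congrArg Prod.snd h1
  rw [Prod.snd_one, DihedralGroup.one_def] at this
  exact absurd this (by simp [-r_zero])

lemma ab_ne_one : a * b ≠ 1 := by
  intro h
  have h1 : φ k (a * b) = (Multiplicative.ofAdd 1, sr 0) := by
    rw [map_mul, φ_a, φ_b]
    simp [Prod.ext_iff]
  rw [h, map_one] at h1
  have := congrArg Prod.fst h1
  rw [Prod.fst_one] at this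
  have h3 : (1 : Multiplicative (ZMod 2)) = Multiplicative.ofAdd 1 := this
  exact absurd h3 (by decide)

lemma ac_ne_one : a * c ≠ 1 := by
  intro h
  have h1 : φ k (a * c) = (Multiplicative.ofAdd 1, sr 1) := by
    rw [map_mul, φ_a, φ_c]
    simp [Prod.ext_iff]
  rw [h, map_one] at h1
  have := congrArg Prod.fst h1
  rw [Prod.fst_one] at this
  have h3 : (1 : Multiplicative (ZMod 2)) = Multiplicative.ofAdd 1 := this
  exact absurd h3 (by decide)

end

/-- Proposition 2.1, group `L2`: it has order `4k`, is isomorphic to `C_2 × D_{2k}`,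
and the listed exponents are the true orders. -/
theorem stmt_4 (k : ℕ) (hk : 2 ≤ k) :
    Nat.card (PresentedGroup (rels k)) = 4 * k ∧
    Nonempty (PresentedGroup (rels k) ≃* Multiplicative (ZMod 2) × DihedralGroup k) ∧
    orderOf (g k 0) = 2 ∧ orderOf (g k 1) = 2 ∧ orderOf (g k 2) = 2 ∧
    orderOf (g k 0 * g k 1) = 2 ∧ orderOf (g k 0 * g k 2) = 2 ∧
    orderOf (g k 1 * g k 2) = k := by
  haveI : NeZero k := ⟨by omega⟩
  haveI : Fact (Nat.Prime 2) := ⟨Nat.prime_two⟩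
  refine ⟨?_, ⟨iso k hk⟩, orderOf_eq_prime (ha k) (a_ne_one k),
    orderOf_eq_prime (hb k) (b_ne_one k), orderOf_eq_prime (hc k) (c_ne_one k),
    orderOf_eq_prime (hab k) (ab_ne_one k), orderOf_eq_prime (hac k) (ac_ne_one k),
    orderOf_t k hk⟩
  rw [Nat.card_congr (iso k hk).toEquiv, Nat.card_prod, DihedralGroup.nat_card,
    Nat.card_congr Multiplicative.toAdd, Nat.card_zmod]
  ring

end Stmt4
end

section
/- Let G be a group generated by elements ρ0, ρ1, ρ2 with ρ0^2 = ρ1^2 = ρ2^2 = 1 and ρ0ρ2 = ρ2ρ0, and let Λ be a group generated by elements σ0, σ1, σ2 such that the triple (σ0, σ1, σ2) satisfies the intersection property in Λ. Suppose π : G → Λ is a group homomorphism with π(ρj) = σj for j = 0, 1, 2, and suppose the restriction of π to the subgroup ⟨ρ0, ρ1⟩ is injective. Then the triple (ρ0, ρ1, ρ2) satisfies the intersection property in G. -/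
/-- A triple `(ρ 0, ρ 1, ρ 2)` of elements of a group `G` satisfies the intersection
property if for all subsets `I, J ⊆ {0,1,2}` the intersection of the subgroups generated
by `{ρ i : i ∈ I}` and `{ρ j : j ∈ J}` is the subgroup generated by `{ρ i : i ∈ I ∩ J}`. -/
def InterProp {G : Type*} [Group G] (ρ : Fin 3 → G) : Prop :=
  ∀ I J : Set (Fin 3),
    Subgroup.closure (ρ '' I) ⊓ Subgroup.closure (ρ '' J) =
      Subgroup.closure (ρ '' (I ∩ J))

/-- Proposition 2.2 (quotient criterion): if an sggi `(G, {ρ0,ρ1,ρ2})` maps onto a string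
C-group `(Λ, {σ0,σ1,σ2})` by `ρ_j ↦ σ_j`, injectively on `⟨ρ0, ρ1⟩`, then `(ρ0,ρ1,ρ2)`
satisfies the intersection property in `G`. -/
theorem stmt_8 {G Λ : Type*} [Group G] [Group Λ]
    (ρ0 ρ1 ρ2 : G) (σ : Fin 3 → Λ)
    (hgenG : Subgroup.closure {ρ0, ρ1, ρ2} = ⊤)
    (hgenΛ : Subgroup.closure (Set.range σ) = ⊤)
    (h0 : ρ0 ^ 2 = 1) (h1 : ρ1 ^ 2 = 1) (h2 : ρ2 ^ 2 = 1)
    (hcomm : ρ0 * ρ2 = ρ2 * ρ0)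
    (hΛ : InterProp σ)
    (π : G →* Λ) (hπ : ∀ j : Fin 3, π (![ρ0, ρ1, ρ2] j) = σ j)
    (hinj : Set.InjOn π (Subgroup.closure {ρ0, ρ1} : Subgroup G)) :
    InterProp ![ρ0, ρ1, ρ2] := by
  set ρ : Fin 3 → G := ![ρ0, ρ1, ρ2] with hρ
  have hρ0 : ρ 0 = ρ0 := rfl
  have hρ1 : ρ 1 = ρ1 := rfl
  have hρ2 : ρ 2 = ρ2 := rfl
  -- basic multiplication facts
  have e0 : ρ0 * ρ0 = 1 := by rw [← pow_two]; exact h0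
  have e2 : ρ2 * ρ2 = 1 := by rw [← pow_two]; exact h2
  have e0' : ∀ x, ρ0 * (ρ0 * x) = x := fun x => by rw [← mul_assoc, e0, one_mul]
  have e2' : ∀ x, ρ2 * (ρ2 * x) = x := fun x => by rw [← mul_assoc, e2, one_mul]
  have c' : ∀ x, ρ2 * (ρ0 * x) = ρ0 * (ρ2 * x) := fun x => by
    rw [← mul_assoc, ← hcomm, mul_assoc]
  have i0 : ρ0⁻¹ = ρ0 := inv_eq_of_mul_eq_one_right e0
  have i2 : ρ2⁻¹ = ρ2 := inv_eq_of_mul_eq_one_right e2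
  -- π maps closures to closures
  have hmapK : ∀ K : Set (Fin 3),
      Subgroup.map π (Subgroup.closure (ρ '' K)) = Subgroup.closure (σ '' K) := by
    intro K
    rw [MonoidHom.map_closure]
    congr 1
    rw [Set.image_image]
    exact Set.image_congr fun j _ => hπ j
  set P : Set (Fin 3) → Set (Fin 3) → Prop := fun I J =>
    Subgroup.closure (ρ '' I) ⊓ Subgroup.closure (ρ '' J) =
      Subgroup.closure (ρ '' (I ∩ J)) with hP
  -- easy direction holds always
  have hge : ∀ I J : Set (Fin 3),
      Subgroup.closure (ρ '' (I ∩ J)) ≤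
        Subgroup.closure (ρ '' I) ⊓ Subgroup.closure (ρ '' J) :=
    fun I J => le_inf
      (Subgroup.closure_mono (Set.image_mono Set.inter_subset_left))
      (Subgroup.closure_mono (Set.image_mono Set.inter_subset_right))
  -- case J ⊆ I
  have hsub : ∀ I J : Set (Fin 3), J ⊆ I → P I J := by
    intro I J h
    show _ = _
    rw [Set.inter_eq_self_of_subset_right h,
      inf_eq_right.2 (Subgroup.closure_mono (Set.image_mono h))]
  have hsub' : ∀ I J : Set (Fin 3), I ⊆ J → P I J := by
    intro I J h
    show _ = _
    rw [Set.inter_comm, inf_comm]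
    exact hsub J I h
  -- main lemma: the case I ⊆ {0,1}
  have main : ∀ I J : Set (Fin 3), I ⊆ {0, 1} → P I J := by
    intro I J hI01
    refine le_antisymm ?_ (hge I J)
    intro x hx
    rw [Subgroup.mem_inf] at hx
    obtain ⟨hxI, hxJ⟩ := hx
    have hπx : π x ∈ Subgroup.closure (σ '' (I ∩ J)) := by
      rw [← hΛ I J, Subgroup.mem_inf, ← hmapK I, ← hmapK J]
      exact ⟨Subgroup.mem_map_of_mem π hxI, Subgroup.mem_map_of_mem π hxJ⟩
    rw [← hmapK (I ∩ J)] at hπx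
    obtain ⟨y, hy, hyx⟩ := hπx
    have him : ρ '' I ⊆ {ρ0, ρ1} := by
      rintro z ⟨i, hi, rfl⟩
      rcases hI01 hi with rfl | hi1
      · exact Set.mem_insert _ _
      · rw [Set.mem_singleton_iff] at hi1
        subst hi1
        exact Set.mem_insert_of_mem _ rfl
    have hsubI : Subgroup.closure (ρ '' I) ≤ Subgroup.closure {ρ0, ρ1} :=
      Subgroup.closure_mono him
    have hx01 : x ∈ Subgroup.closure {ρ0, ρ1} := hsubI hxI
    have hy01 : y ∈ Subgroup.closure {ρ0, ρ1} :=
      hsubI (Subgroup.closure_mono (Set.image_mono Set.inter_subset_left) hy)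
    have hxy : x = y := (hinj hy01 hx01 hyx).symm
    rw [hxy]
    exact hy
  have main' : ∀ I J : Set (Fin 3), J ⊆ {0, 1} → P I J := by
    intro I J h
    show _ = _
    rw [Set.inter_comm, inf_comm]
    exact main J I h
  -- structure of ⟨ρ0, ρ2⟩
  have hK : ∀ x ∈ Subgroup.closure ({ρ0, ρ2} : Set G),
      x = 1 ∨ x = ρ0 ∨ x = ρ2 ∨ x = ρ0 * ρ2 := by
    intro x hx
    induction hx using Subgroup.closure_induction with
    | mem z hz =>
        rcases hz with rfl | hz
        · exact Or.inr (Or.inl rfl)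
        · rw [Set.mem_singleton_iff] at hz; subst hz; exact Or.inr (Or.inr (Or.inl rfl))
    | one => left; rfl
    | mul a b _ _ ha hb =>
      rcases ha with rfl | rfl | rfl | rfl <;> rcases hb with rfl | rfl | rfl | rfl <;>
        simp [e0, e2, e0', e2', c', ← hcomm, mul_assoc]
    | inv a _ ha =>
      rcases ha with rfl | rfl | rfl | rfl <;>
        simp [i0, i2, mul_inv_rev, hcomm]
  -- trivial intersection facts from main
  have t0 : Subgroup.closure (ρ '' {0}) ⊓ Subgroup.closure (ρ '' {1, 2}) = ⊥ := by
    have hss : ({0} : Set (Fin 3)) ⊆ {0, 1} := by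
      intro i hi
      rw [Set.mem_singleton_iff] at hi
      subst hi
      exact Set.mem_insert _ _
    have h := main {0} {1, 2} hss
    have hie : ({0} : Set (Fin 3)) ∩ {1, 2} = ∅ := by
      ext i; fin_cases i <;> simp
    rw [hP] at h
    simp only [hie, Set.image_empty, Subgroup.closure_empty] at h
    exact h
  -- image computations
  have him02 : ρ '' ({0, 2} : Set (Fin 3)) = {ρ0, ρ2} := by
    rw [Set.image_pair, hρ0, hρ2]
  have him12 : ρ '' ({1, 2} : Set (Fin 3)) = {ρ1, ρ2} := by
    rw [Set.image_pair, hρ1, hρ2]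
  have him2 : ρ '' ({2} : Set (Fin 3)) = {ρ2} := by
    rw [Set.image_singleton, hρ2]
  have him0 : ρ '' ({0} : Set (Fin 3)) = {ρ0} := by
    rw [Set.image_singleton, hρ0]
  -- ρ0 trivial when in ⟨ρ1,ρ2⟩
  have hρ0triv : ρ0 ∈ Subgroup.closure ({ρ1, ρ2} : Set G) → ρ0 = 1 := by
    intro h
    have h0' : ρ0 ∈ Subgroup.closure (ρ '' {0}) := by
      rw [him0]; exact Subgroup.subset_closure rfl
    have : ρ0 ∈ (⊥ : Subgroup G) := by
      rw [← t0, Subgroup.mem_inf, him12]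
      exact ⟨h0', h⟩
    simpa using this
  -- the hard case: {0,2} vs {1,2}
  have hard : P {0, 2} {1, 2} := by
    have hinter : ({0, 2} : Set (Fin 3)) ∩ {1, 2} = {2} := by
      ext i; fin_cases i <;> simp
    show _ = _
    rw [hinter, him02, him12, him2]
    refine le_antisymm ?_ (le_inf
      (Subgroup.closure_mono (Set.singleton_subset_iff.2 (Set.mem_insert_of_mem _ rfl)))
      (Subgroup.closure_mono (Set.singleton_subset_iff.2 (Set.mem_insert_of_mem _ rfl))))
    intro x hx
    rw [Subgroup.mem_inf] at hx
    obtain ⟨hxL, hxR⟩ := hx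
    have hρ2mem : ρ2 ∈ Subgroup.closure ({ρ1, ρ2} : Set G) :=
      Subgroup.subset_closure (Set.mem_insert_of_mem _ rfl)
    rcases hK x hxL with rfl | rfl | rfl | rfl
    · exact one_mem _
    · rw [hρ0triv hxR]; exact one_mem _
    · exact Subgroup.subset_closure rfl
    · have : ρ0 ∈ Subgroup.closure ({ρ1, ρ2} : Set G) := by
        have := mul_mem hxR (inv_mem hρ2mem)
        rwa [mul_assoc, mul_inv_cancel, mul_one] at this
      rw [hρ0triv this, one_mul]
      exact Subgroup.subset_closure rfl
  have hard' : P {1, 2} {0, 2} := by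
    show _ = _
    rw [Set.inter_comm, inf_comm]
    exact hard
  -- now the case analysis
  intro I J
  show P I J
  by_cases h2I : (2 : Fin 3) ∈ I
  · by_cases h2J : (2 : Fin 3) ∈ J
    · by_cases h0I : (0 : Fin 3) ∈ I
      · by_cases h1I : (1 : Fin 3) ∈ I
        · exact hsub I J (fun j _ => by fin_cases j <;> assumption)
        · -- I = {0, 2}
          have hIeq : I = {0, 2} := by
            ext i; fin_cases i <;> simp [h0I, h1I, h2I]
          by_cases h0J : (0 : Fin 3) ∈ J
          · by_cases h1J : (1 : Fin 3) ∈ J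
            · exact hsub' I J (fun i _ => by fin_cases i <;> assumption)
            · have hJeq : J = {0, 2} := by
                ext i; fin_cases i <;> simp [h0J, h1J, h2J]
              rw [hIeq, hJeq]
              exact hsub _ _ le_rfl
          · by_cases h1J : (1 : Fin 3) ∈ J
            · have hJeq : J = {1, 2} := by
                ext i; fin_cases i <;> simp [h0J, h1J, h2J]
              rw [hIeq, hJeq]; exact hard
            · -- J = {2} ⊆ I
              exact hsub I J (fun j hj => by
                fin_cases j
                · exact absurd hj h0J
                · exact absurd hj h1J
                · exact h2I)
      · by_cases h1I : (1 : Fin 3) ∈ I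
        · -- I = {1, 2}
          have hIeq : I = {1, 2} := by
            ext i; fin_cases i <;> simp [h0I, h1I, h2I]
          by_cases h0J : (0 : Fin 3) ∈ J
          · by_cases h1J : (1 : Fin 3) ∈ J
            · exact hsub' I J (fun i _ => by fin_cases i <;> assumption)
            · have hJeq : J = {0, 2} := by
                ext i; fin_cases i <;> simp [h0J, h1J, h2J]
              rw [hIeq, hJeq]; exact hard'
          · -- J ⊆ {1,2} ⊆ ... J ⊆ I
            exact hsub I J (fun j hj => by
              fin_cases j
              · exact absurd hj h0J
              · exact h1I
              · exact h2I)
        · -- I = {2} ⊆ J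
          exact hsub' I J (fun i hi => by
            fin_cases i
            · exact absurd hi h0I
            · exact absurd hi h1I
            · exact h2J)
    · exact main' I J (fun j hj => by
        fin_cases j
        · exact Set.mem_insert _ _
        · exact Set.mem_insert_of_mem _ rfl
        · exact absurd hj h2J)
  · exact main I J (fun i hi => by
      fin_cases i
      · exact Set.mem_insert _ _
      · exact Set.mem_insert_of_mem _ rfl
      · exact absurd hi h2I)
end

section
/- Let G be a group and let ρ0, ρ1, ρ2 ∈ G satisfy ρ0^2 = ρ1^2 = ρ2^2 = 1 and ρ0ρ2 = ρ2ρ0. Then [(ρ0ρ1)^2, ρ2] = (ρ2ρ1)⁻¹ [ρ0, (ρ1ρ2)^2] (ρ2ρ1), where [x, y] denotes the commutator x⁻¹y⁻¹xy. -/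
/-- The commutator `[x, y] = x⁻¹ y⁻¹ x y` as used in the paper. -/
def pc {G : Type*} [Group G] (x y : G) : G := x⁻¹ * y⁻¹ * x * y

/-- A commutator identity from the proof of Theorem 4.1:
`[(ρ0 ρ1)², ρ2] = [ρ0, (ρ1 ρ2)²] ^ (ρ2 ρ1)`. -/
theorem stmt_18 {G : Type*} [Group G] (ρ0 ρ1 ρ2 : G)
    (h0 : ρ0 ^ 2 = 1) (h1 : ρ1 ^ 2 = 1) (h2 : ρ2 ^ 2 = 1)
    (hc : ρ0 * ρ2 = ρ2 * ρ0) :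
    pc ((ρ0 * ρ1) ^ 2) ρ2 = (ρ2 * ρ1)⁻¹ * pc ρ0 ((ρ1 * ρ2) ^ 2) * (ρ2 * ρ1) := by
  have i0 : ρ0⁻¹ = ρ0 := by rw [inv_eq_iff_mul_eq_one, ← pow_two, h0]
  have i1 : ρ1⁻¹ = ρ1 := by rw [inv_eq_iff_mul_eq_one, ← pow_two, h1]
  have i2 : ρ2⁻¹ = ρ2 := by rw [inv_eq_iff_mul_eq_one, ← pow_two, h2]
  have s0 : ∀ x : G, ρ0 * (ρ0 * x) = x := by
    intro x; rw [← mul_assoc, ← pow_two, h0, one_mul]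
  have s1 : ∀ x : G, ρ1 * (ρ1 * x) = x := by
    intro x; rw [← mul_assoc, ← pow_two, h1, one_mul]
  have s2 : ∀ x : G, ρ2 * (ρ2 * x) = x := by
    intro x; rw [← mul_assoc, ← pow_two, h2, one_mul]
  have c : ∀ x : G, ρ2 * (ρ0 * x) = ρ0 * (ρ2 * x) := by
    intro x; rw [← mul_assoc, ← hc, mul_assoc]
  have c' : ρ2 * ρ0 = ρ0 * ρ2 := hc.symm
  have t1 : ρ1 * ρ1 = 1 := by rw [← pow_two, h1]
  simp only [pc, pow_two, mul_inv_rev, i0, i1, i2, mul_assoc, s0, s1, s2, c, c', t1, mul_one]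
end

section
/- Let G be a group and let ρ0, ρ1, ρ2 ∈ G satisfy ρ0^2 = ρ1^2 = ρ2^2 = 1 and ρ0ρ2 = ρ2ρ0. Then (i) [(ρ0ρ1)^2, ρ2] = (ρ1ρ0ρ1ρ2)^2, and (ii) if in addition (ρ0ρ1)^4 = 1 and (ρ1ρ2)^4 = 1, then [(ρ0ρ1)^2, (ρ1ρ2)^2] = (ρ0ρ1ρ2)^4, where [x, y] denotes the commutator x⁻¹y⁻¹xy. -/
/-- Identities from the proof of Theorem 4.1 for the quotient group `G2` of type `{4,4}`:
(i) `[(ρ0 ρ1)², ρ2] = (ρ1 ρ0 ρ1 ρ2)²`, and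
(ii) if moreover `(ρ0 ρ1)⁴ = (ρ1 ρ2)⁴ = 1`, then `[(ρ0 ρ1)², (ρ1 ρ2)²] = (ρ0 ρ1 ρ2)⁴`. -/
theorem stmt_19 {G : Type*} [Group G] (ρ0 ρ1 ρ2 : G)
    (h0 : ρ0 ^ 2 = 1) (h1 : ρ1 ^ 2 = 1) (h2 : ρ2 ^ 2 = 1)
    (hc : ρ0 * ρ2 = ρ2 * ρ0) :
    pc ((ρ0 * ρ1) ^ 2) ρ2 = (ρ1 * ρ0 * ρ1 * ρ2) ^ 2 ∧
    ((ρ0 * ρ1) ^ 4 = 1 → (ρ1 * ρ2) ^ 4 = 1 →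
      pc ((ρ0 * ρ1) ^ 2) ((ρ1 * ρ2) ^ 2) = (ρ0 * ρ1 * ρ2) ^ 4) := by

  have i0 : ρ0⁻¹ = ρ0 := by rw [← mul_eq_one_iff_inv_eq, ← sq, h0]
  have i1 : ρ1⁻¹ = ρ1 := by rw [← mul_eq_one_iff_inv_eq, ← sq, h1]
  have i2 : ρ2⁻¹ = ρ2 := by rw [← mul_eq_one_iff_inv_eq, ← sq, h2]
  have s0 : ∀ x : G, ρ0 * (ρ0 * x) = x := by
    intro x; rw [← mul_assoc, ← sq, h0, one_mul]
  have s1 : ∀ x : G, ρ1 * (ρ1 * x) = x := by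
    intro x; rw [← mul_assoc, ← sq, h1, one_mul]
  have s2 : ∀ x : G, ρ2 * (ρ2 * x) = x := by
    intro x; rw [← mul_assoc, ← sq, h2, one_mul]
  have c02 : ∀ x : G, ρ2 * (ρ0 * x) = ρ0 * (ρ2 * x) := by
    intro x; rw [← mul_assoc, ← hc, mul_assoc]
  constructor
  · simp only [pc, pow_succ, pow_zero, one_mul, mul_inv_rev, i0, i1, i2, mul_assoc]
    rw [c02, s0]
  · intro h4 h4'
    have e01 : ∀ x : G, ρ1 * (ρ0 * (ρ1 * (ρ0 * x))) = ρ0 * (ρ1 * (ρ0 * (ρ1 * x))) := by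
      intro x
      have h := h4
      rw [show (4:ℕ) = 2+2 from rfl, pow_add, mul_eq_one_iff_eq_inv] at h
      have key : (ρ1*ρ0)^2 = (ρ0*ρ1)^2 := by
        rw [h, sq, sq, mul_inv_rev, mul_inv_rev, i0, i1, mul_assoc]
      rw [show ρ1 * (ρ0 * (ρ1 * (ρ0 * x))) = (ρ1*ρ0)^2 * x by simp [sq, mul_assoc], key]
      simp [sq, mul_assoc]
    have e12 : ∀ x : G, ρ2 * (ρ1 * (ρ2 * (ρ1 * x))) = ρ1 * (ρ2 * (ρ1 * (ρ2 * x))) := by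
      intro x
      have h := h4'
      rw [show (4:ℕ) = 2+2 from rfl, pow_add, mul_eq_one_iff_eq_inv] at h
      have key : (ρ2*ρ1)^2 = (ρ1*ρ2)^2 := by
        rw [h, sq, sq, mul_inv_rev, mul_inv_rev, i1, i2, mul_assoc]
      rw [show ρ2 * (ρ1 * (ρ2 * (ρ1 * x))) = (ρ2*ρ1)^2 * x by simp [sq, mul_assoc], key]
      simp [sq, mul_assoc]
    simp only [pc, pow_succ, pow_zero, one_mul, mul_inv_rev, i0, i1, i2, mul_assoc]
    rw [s1, e01, e12, s1, ← c02, ← c02]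
end
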